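/- Let (T(t)) and (S(t)) be C₀-semigroups on a Banach space E, with (A,dom(A)) the generator of (T(t)), 0 ∈ ρ(A), and extrapolation data (E₋₁,ι,T₋₁,A₋₁). Let (𝒰(t)) and (𝒱(t)) be the semigroups on 𝓛(E) left implemented by (T(t)) and (S(t)), with (𝒢,dom(𝒢)) the generator of (𝒰(t)). Then for t₀ > 0 the following are equivalent: (i) there exists 𝒦 ∈ 𝒮^{DS,τ_sot}_{t₀}(𝒰) with Ran(𝒦) ⊆ F₀(𝒢) such that (𝒱(t)) is generated by (𝒢₋₁+𝒦)|_{𝓛(E)}; (ii) there exists B ∈ 𝒮^{DS}_{t₀}(T) with Ran(B) ⊆ F₀(A) such that (S(t)) is generated by (A₋₁+B)|_E. -/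

import Mathlib

open Set Filter Topology MeasureTheory

variable {E E₁ : Type*} [NormedAddCommGroup E] [NormedSpace ℝ E]
  [NormedAddCommGroup E₁] [NormedSpace ℝ E₁]

/-- A `C₀`-semigroup on a Banach space `E`. -/
structure IsC0Semigroup (T : ℝ → E →L[ℝ] E) : Prop where
  map_zero : T 0 = 1
  map_add : ∀ s t : ℝ, 0 ≤ s → 0 ≤ t → T (s + t) = (T s).comp (T t)
  strongCont : ∀ x : E, ContinuousOn (fun t => T t x) (Ici (0:ℝ))

/-- The generator relation of a `C₀`-semigroup: `y = Ax`. -/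
def C0GenRel (T : ℝ → E →L[ℝ] E) (x y : E) : Prop :=
  Tendsto (fun t : ℝ => t⁻¹ • (T t x - x)) (nhdsWithin 0 (Ioi 0)) (nhds y)

/-- Extrapolation data `(E₋₁, ι, T₋₁, A₋₁)` for a `C₀`-semigroup `T` with `0 ∈ ρ(A)`:
`ι : E → E₋₁` is a continuous dense injection, `T₋₁` a `C₀`-semigroup on `E₋₁` extending `T`
via `ι`, whose generator `A₋₁` has domain `ι(E)`, extends `A`, and `Am = A₋₁ ∘ ι : E → E₋₁`
is an isomorphism. -/
structure ExtrapolationData (T : ℝ → E →L[ℝ] E) (T₁ : ℝ → E₁ →L[ℝ] E₁)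
    (ι : E →L[ℝ] E₁) (Am : E ≃L[ℝ] E₁) : Prop where
  c0T : IsC0Semigroup T
  c0T₁ : IsC0Semigroup T₁
  inj : Function.Injective ι
  dense : DenseRange ι
  intertwine : ∀ t : ℝ, 0 ≤ t → ∀ x : E, T₁ t (ι x) = ι (T t x)
  gen₁ : ∀ x : E, C0GenRel T₁ (ι x) (Am x)
  gen₁_dom : ∀ z y : E₁, C0GenRel T₁ z y → z ∈ Set.range ι
  gen_extends : ∀ x y : E, C0GenRel T x y → (Am x : E₁) = ι y
  zero_res : ∃ R : E →L[ℝ] E, (∀ y : E, C0GenRel T (R y) y) ∧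
    ∀ x y : E, C0GenRel T x y → x = R y

/-- The Desch–Schappacher admissibility class `𝒮^{DS}_{t₀}(T)` for a `C₀`-semigroup:
for every strongly continuous `𝓛(E)`-valued `F` the Volterra integrals take values in `ι(E)`,
give a strongly continuous `𝓛(E)`-valued function `V_B F`, and `‖V_B‖ ≤ q < 1`. -/
def MemSDS (T₁ : ℝ → E₁ →L[ℝ] E₁) (ι : E →L[ℝ] E₁) (B : E →L[ℝ] E₁) (t₀ : ℝ) : Prop :=
  ∃ q : ℝ, 0 ≤ q ∧ q < 1 ∧
    ∀ F : ℝ → E →L[ℝ] E, (∀ x : E, ContinuousOn (fun r => F r x) (Icc (0:ℝ) t₀)) →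
      ∃ G : ℝ → E →L[ℝ] E,
        (∀ t ∈ Icc (0:ℝ) t₀, ∀ x : E,
          ι (G t x) = ∫ r in (0:ℝ)..t, T₁ (t - r) (B (F r x))) ∧
        (∀ x : E, ContinuousOn (fun t => G t x) (Icc (0:ℝ) t₀)) ∧
        ∀ c : ℝ, (∀ s ∈ Icc (0:ℝ) t₀, ‖F s‖ ≤ c) → ∀ t ∈ Icc (0:ℝ) t₀, ‖G t‖ ≤ q * c

/-- The semigroup on `𝓛(E)` left implemented by `T`: `𝒰(t)C := T(t) ∘ C`. -/
noncomputable def implemented (T : ℝ → E →L[ℝ] E) (t : ℝ) :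
    (E →L[ℝ] E) →L[ℝ] (E →L[ℝ] E) :=
  ContinuousLinearMap.compL ℝ E E E (T t)

/-- The extrapolated implemented semigroup on `𝓛(E,E₋₁)`: `𝒰₋₁(t)S := T₋₁(t) ∘ S`. -/
noncomputable def implementedExt (T₁ : ℝ → E₁ →L[ℝ] E₁) (t : ℝ) :
    (E →L[ℝ] E₁) →L[ℝ] (E →L[ℝ] E₁) :=
  ContinuousLinearMap.compL ℝ E E₁ E₁ (T₁ t)

/-- Membership in the space `𝔛_{t₀}` of strongly `τ_sot`-continuous, norm-bounded,
bi-equicontinuous functions `F : [0,t₀] → 𝓛(𝓛(E))`. -/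
def MemXsot (t₀ : ℝ) (F : ℝ → (E →L[ℝ] E) →L[ℝ] (E →L[ℝ] E)) : Prop :=
  (∀ (C : E →L[ℝ] E) (x : E), ContinuousOn (fun t => (F t C) x) (Icc (0:ℝ) t₀)) ∧
  (∃ M : ℝ, ∀ t ∈ Icc (0:ℝ) t₀, ‖F t‖ ≤ M) ∧
  ∀ u : ℕ → E →L[ℝ] E, (∃ c : ℝ, ∀ n, ‖u n‖ ≤ c) →
    (∀ x : E, Tendsto (fun n => u n x) atTop (nhds (0:E))) →
    ∀ x : E, ∀ ε > (0:ℝ), ∃ N : ℕ, ∀ n ≥ N, ∀ t ∈ Icc (0:ℝ) t₀, ‖(F t (u n)) x‖ < ε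

/-- The Desch–Schappacher admissibility class `𝒮^{DS,τ_sot}_{t₀}(𝒰)` for the implemented
semigroup: `𝒦 : 𝓛(E) → 𝓛(E,E₋₁)` is `τ_sot`-to-`τ_sot` continuous, and the Volterra operator
`(V_𝒦 F)(t)C = ∫₀ᵗ 𝒰₋₁(t-r) 𝒦(F(r)C) dr` takes values in `𝓛(E)`, maps `𝔛_{t₀}` into itself
and has `‖V_𝒦‖ ≤ q < 1`. -/
def MemSDSsot (T₁ : ℝ → E₁ →L[ℝ] E₁) (ι : E →L[ℝ] E₁)
    (K : (E →L[ℝ] E) →L[ℝ] (E →L[ℝ] E₁)) (t₀ : ℝ) : Prop :=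
  (∀ x : E, ∃ (v : Finset E) (c : ℝ), 0 ≤ c ∧
      ∀ S : E →L[ℝ] E, ‖(K S) x‖ ≤ c * ∑ y ∈ v, ‖S y‖) ∧
  ∃ q : ℝ, 0 ≤ q ∧ q < 1 ∧
    ∀ F : ℝ → (E →L[ℝ] E) →L[ℝ] (E →L[ℝ] E), MemXsot t₀ F →
      ∃ G : ℝ → (E →L[ℝ] E) →L[ℝ] (E →L[ℝ] E), MemXsot t₀ G ∧
        (∀ t ∈ Icc (0:ℝ) t₀, ∀ (C : E →L[ℝ] E) (x : E),
          ι ((G t C) x) = ∫ r in (0:ℝ)..t, T₁ (t - r) ((K (F r C)) x)) ∧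
        ∀ c : ℝ, (∀ s ∈ Icc (0:ℝ) t₀, ‖F s‖ ≤ c) → ∀ t ∈ Icc (0:ℝ) t₀, ‖G t‖ ≤ q * c

/-- A `τ_sot`-bi-continuous semigroup on `𝓛(E)`. -/
structure IsBiContSotSemigroup (U : ℝ → (E →L[ℝ] E) →L[ℝ] (E →L[ℝ] E)) : Prop where
  map_zero : U 0 = 1
  map_add : ∀ s t : ℝ, 0 ≤ s → 0 ≤ t → U (s + t) = (U s).comp (U t)
  strongCont : ∀ (C : E →L[ℝ] E) (x : E), ContinuousOn (fun t => (U t C) x) (Ici (0:ℝ))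
  expBound : ∃ M : ℝ, 1 ≤ M ∧ ∃ ω : ℝ, ∀ t : ℝ, 0 ≤ t → ‖U t‖ ≤ M * Real.exp (ω * t)
  biequi : ∀ t₀ : ℝ, 0 < t₀ → ∀ u : ℕ → E →L[ℝ] E, (∃ c : ℝ, ∀ n, ‖u n‖ ≤ c) →
    (∀ x : E, Tendsto (fun n => u n x) atTop (nhds (0:E))) →
    ∀ x : E, ∀ ε > (0:ℝ), ∃ N : ℕ, ∀ n ≥ N, ∀ t ∈ Icc (0:ℝ) t₀, ‖(U t (u n)) x‖ < ε

/-- The generator relation of a `τ_sot`-bi-continuous semigroup on `𝓛(E)`. -/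
def SotGenRel (U : ℝ → (E →L[ℝ] E) →L[ℝ] (E →L[ℝ] E)) (C Y : E →L[ℝ] E) : Prop :=
  (∀ x : E, Tendsto (fun t : ℝ => t⁻¹ • ((U t C) x - C x))
      (nhdsWithin 0 (Ioi 0)) (nhds (Y x))) ∧
    ∃ M : ℝ, ∀ t ∈ Ioc (0:ℝ) 1, ‖U t C - C‖ ≤ M * t

/-- `V` is a `τ_sot`-bi-continuous semigroup on `𝓛(E)` generated by `(𝒢₋₁ + 𝒦)|_{𝓛(E)}`,
where `𝒢₋₁ C = A₋₁ ∘ ι ∘ C` and the domain is `{C : 𝒢₋₁C + 𝒦C ∈ 𝓛(E)}`. -/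
def GeneratedByPerturbedImpl (V : ℝ → (E →L[ℝ] E) →L[ℝ] (E →L[ℝ] E))
    (ι : E →L[ℝ] E₁) (Am : E ≃L[ℝ] E₁)
    (K : (E →L[ℝ] E) →L[ℝ] (E →L[ℝ] E₁)) : Prop :=
  IsBiContSotSemigroup V ∧ ∀ C Y : E →L[ℝ] E,
    SotGenRel V C Y ↔ ι.comp Y = ((Am : E →L[ℝ] E₁)).comp C + K C



/-- Uniform bound from strong continuity (Banach–Steinhaus). -/
lemma aux_uniform_bound [CompleteSpace E] {F : ℝ → E →L[ℝ] E₁} {b : ℝ}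
    (h : ∀ x, ContinuousOn (fun t => F t x) (Icc (0:ℝ) b)) :
    ∃ M : ℝ, 0 ≤ M ∧ ∀ t ∈ Icc (0:ℝ) b, ‖F t‖ ≤ M := by
  rcases isEmpty_or_nonempty (Icc (0:ℝ) b) with he | hne
  · exact ⟨0, le_refl 0, fun t ht => (he.false ⟨t, ht⟩).elim⟩
  · have hpt : ∀ x : E, ∃ C, ∀ i : Icc (0:ℝ) b, ‖F i x‖ ≤ C := by
      intro x
      obtain ⟨C, hC⟩ := isCompact_Icc.exists_bound_of_continuousOn (h x)
      exact ⟨C, fun i => hC i i.2⟩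
    obtain ⟨M, hM⟩ := banach_steinhaus (g := fun i : Icc (0:ℝ) b => F i) hpt
    refine ⟨max M 0, le_max_right _ _, fun t ht => (hM ⟨t, ht⟩).trans (le_max_left _ _)⟩

lemma aux_sg_bound [CompleteSpace E] {S : ℝ → E →L[ℝ] E} (hS : IsC0Semigroup S) (b : ℝ) :
    ∃ M : ℝ, 1 ≤ M ∧ ∀ t ∈ Icc (0:ℝ) b, ‖S t‖ ≤ M := by
  obtain ⟨M, hM0, hM⟩ := aux_uniform_bound
    (F := S) (b := b) (fun x => (hS.strongCont x).mono Icc_subset_Ici_self)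
  exact ⟨max M 1, le_max_right _ _, fun t ht => (hM t ht).trans (le_max_left _ _)⟩

lemma aux_hasDerivWithinAt {S : ℝ → E →L[ℝ] E} (hS : IsC0Semigroup S) {x y : E}
    (hxy : C0GenRel S x y) {r : ℝ} (hr : 0 ≤ r) :
    HasDerivWithinAt (fun s => S s x) (S r y) (Ici r) r := by
  rw [hasDerivWithinAt_iff_tendsto_slope, Ici_sdiff_left]
  have h1 : Tendsto (fun t : ℝ => t - r) (𝓝[Ioi r] r) (𝓝[Ioi 0] 0) := by
    apply tendsto_nhdsWithin_of_tendsto_nhds_of_eventually_within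
    · have h0 : Tendsto (fun t : ℝ => t - r) (𝓝 r) (𝓝 0) := by
        have hc : Continuous (fun t : ℝ => t - r) := continuous_id.sub continuous_const
        simpa using hc.tendsto r
      exact h0.mono_left nhdsWithin_le_nhds
    · filter_upwards [self_mem_nhdsWithin] with t ht
      exact sub_pos.2 (show r < t from ht)
  have h2 : Tendsto (fun t : ℝ => S r ((t - r)⁻¹ • (S (t - r) x - x)))
      (𝓝[Ioi r] r) (𝓝 (S r y)) :=
    ((S r).continuous.tendsto y).comp (hxy.comp h1)
  refine h2.congr' ?_
  filter_upwards [self_mem_nhdsWithin] with t ht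
  have htr : (0:ℝ) < t - r := sub_pos.2 ht
  have hst : S t x = S r (S (t - r) x) := by
    have := hS.map_add r (t - r) hr htr.le
    rw [show r + (t - r) = t by ring] at this
    rw [this]; rfl
  have hcalc : (S r) ((t - r)⁻¹ • (S (t - r) x - x)) = (t - r)⁻¹ • (S t x - S r x) := by
    rw [ContinuousLinearMap.map_smul, ContinuousLinearMap.map_sub, ← hst]
  rw [slope_def_module, hcalc]



/-- Favard-type bound from the generator relation, with constant uniform in `x, y`. -/
lemma aux_favard [CompleteSpace E] {S : ℝ → E →L[ℝ] E} (hS : IsC0Semigroup S) :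
    ∃ M : ℝ, 1 ≤ M ∧ ∀ x y : E, C0GenRel S x y → ∀ t ∈ Icc (0:ℝ) 1,
      ‖S t x - x‖ ≤ M * ‖y‖ * t := by
  obtain ⟨M, hM1, hM⟩ := aux_sg_bound hS 1
  refine ⟨M, hM1, fun x y hxy t ht => ?_⟩
  have hcont : ContinuousOn (fun s => S s x) (Icc 0 t) :=
    (hS.strongCont x).mono Icc_subset_Ici_self
  have hder : ∀ r ∈ Ico (0:ℝ) t, HasDerivWithinAt (fun s => S s x) (S r y) (Ici r) r :=
    fun r hr => aux_hasDerivWithinAt hS hxy hr.1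
  have hbd : ∀ r ∈ Ico (0:ℝ) t, ‖S r y‖ ≤ M * ‖y‖ := by
    intro r hr
    calc ‖S r y‖ ≤ ‖S r‖ * ‖y‖ := (S r).le_opNorm y
    _ ≤ M * ‖y‖ := by
        have := hM r ⟨hr.1, hr.2.le.trans ht.2⟩
        exact mul_le_mul_of_nonneg_right this (norm_nonneg y)
  have := norm_image_sub_le_of_norm_deriv_right_le_segment hcont hder hbd t
    ⟨ht.1, le_refl t⟩
  have h0 : S 0 x = x := by rw [hS.map_zero]; rfl
  rw [h0, sub_zero] at this
  exact this

/-- Exponential growth bound. -/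
lemma aux_exp_bound [CompleteSpace E] {S : ℝ → E →L[ℝ] E} (hS : IsC0Semigroup S) :
    ∃ M : ℝ, 1 ≤ M ∧ ∃ ω : ℝ, ∀ t : ℝ, 0 ≤ t → ‖S t‖ ≤ M * Real.exp (ω * t) := by
  obtain ⟨M, hM1, hM⟩ := aux_sg_bound hS 1
  have hM0 : (0:ℝ) < M := lt_of_lt_of_le zero_lt_one hM1
  have key : ∀ n : ℕ, ∀ t ∈ Icc (0:ℝ) ((n:ℝ)+1), ‖S t‖ ≤ M ^ (n+1) := by
    intro n
    induction n with
    | zero => intro t ht; simpa using hM t (by simpa using ht)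
    | succ n ih =>
      intro t ht
      by_cases hle : t ≤ (n:ℝ) + 1
      · calc ‖S t‖ ≤ M ^ (n+1) := ih t ⟨ht.1, hle⟩
        _ ≤ M ^ (n+2) := pow_le_pow_right₀ hM1 (by omega)
      · push_neg at hle
        have h1t : (0:ℝ) ≤ t - 1 := by
          have hn0 : (0:ℝ) ≤ (n:ℝ) := Nat.cast_nonneg n
          have : (1:ℝ) ≤ (n:ℝ) + 1 := by linarith
          linarith
        have : S t = (S (t-1)).comp (S 1) := by
          have := hS.map_add (t-1) 1 h1t zero_le_one
          rwa [show t - 1 + 1 = t by ring] at this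
        rw [this]
        calc ‖(S (t-1)).comp (S 1)‖ ≤ ‖S (t-1)‖ * ‖S 1‖ := ContinuousLinearMap.opNorm_comp_le _ _
        _ ≤ M ^ (n+1) * M := by
            apply mul_le_mul (ih (t-1) ⟨h1t, by push_cast at ht ⊢; linarith [ht.2]⟩)
              (hM 1 ⟨zero_le_one, le_refl 1⟩) (norm_nonneg _) (by positivity)
        _ = M ^ (n+2) := by ring
  refine ⟨M, hM1, Real.log M, fun t ht => ?_⟩
  have hn := key ⌊t⌋₊ t ⟨ht, (Nat.lt_floor_add_one t).le⟩
  have hexp : M ^ (⌊t⌋₊ : ℕ) ≤ Real.exp (Real.log M * t) := by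
    have : M ^ (⌊t⌋₊ : ℕ) = Real.exp ((⌊t⌋₊ : ℝ) * Real.log M) := by
      rw [Real.exp_nat_mul, Real.exp_log hM0]
    rw [this]
    apply Real.exp_le_exp.2
    have hlog : 0 ≤ Real.log M := Real.log_nonneg hM1
    have hfl : (⌊t⌋₊ : ℝ) ≤ t := Nat.floor_le ht
    calc (⌊t⌋₊ : ℝ) * Real.log M ≤ t * Real.log M := mul_le_mul_of_nonneg_right hfl hlog
    _ = Real.log M * t := by ring
  calc ‖S t‖ ≤ M ^ (⌊t⌋₊ + 1) := hn
  _ = M * M ^ (⌊t⌋₊:ℕ) := by ring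
  _ ≤ M * Real.exp (Real.log M * t) := mul_le_mul_of_nonneg_left hexp hM0.le



/-- Averages converge to the value (right-hand version). -/
lemma aux_avg_tendsto [CompleteSpace E] {f : ℝ → E} (hf : ContinuousOn f (Ici (0:ℝ))) {a : ℝ} (ha : 0 ≤ a) :
    Tendsto (fun h : ℝ => h⁻¹ • ∫ u in a..(a+h), f u) (𝓝[Ioi 0] 0) (𝓝 (f a)) := by
  rw [Metric.tendsto_nhdsWithin_nhds]
  intro ε hε
  have hcw : ContinuousWithinAt f (Ici 0) a := hf a ha
  rw [Metric.continuousWithinAt_iff] at hcw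
  obtain ⟨δ, hδ, hδ'⟩ := hcw (ε/2) (by linarith)
  refine ⟨δ, hδ, fun h hh hhd => ?_⟩
  have hh0 : (0:ℝ) < h := hh
  rw [Real.dist_eq, sub_zero, abs_of_pos hh0] at hhd
  rw [dist_eq_norm]
  have hint : IntervalIntegrable f volume a (a+h) :=
    (hf.mono (fun u hu => by
      rw [uIcc_of_le (by linarith : a ≤ a + h)] at hu
      exact le_trans ha hu.1)).intervalIntegrable
  have hconst : (∫ _ in a..(a+h), f a) = h • f a := by
    rw [intervalIntegral.integral_const]; congr 1; ring
  have key : h⁻¹ • (∫ u in a..(a+h), f u) - f a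
      = h⁻¹ • ∫ u in a..(a+h), (f u - f a) := by
    rw [intervalIntegral.integral_sub hint intervalIntegrable_const, hconst, smul_sub,
      smul_smul, inv_mul_cancel₀ (ne_of_gt hh0), one_smul]
  rw [key]
  have hbd : ‖∫ u in a..(a+h), (f u - f a)‖ ≤ (ε/2) * |a + h - a| := by
    apply intervalIntegral.norm_integral_le_of_norm_le_const
    intro u hu
    rw [uIoc_of_le (by linarith : a ≤ a + h)] at hu
    have hu0 : u ∈ Ici (0:ℝ) := le_trans ha hu.1.le
    have : dist u a < δ := by
      rw [Real.dist_eq, abs_of_nonneg (by linarith [hu.1] : (0:ℝ) ≤ u - a)]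
      linarith [hu.2]
    have := hδ' hu0 this
    rw [dist_eq_norm] at this
    exact this.le
  rw [norm_smul, norm_inv, Real.norm_eq_abs, abs_of_pos hh0]
  have : |a + h - a| = h := by rw [show a + h - a = h by ring, abs_of_pos hh0]
  rw [this] at hbd
  calc h⁻¹ * ‖∫ u in a..(a+h), (f u - f a)‖ ≤ h⁻¹ * ((ε/2) * h) := by
        apply mul_le_mul_of_nonneg_left hbd (by positivity)
  _ = ε/2 := by field_simp
  _ < ε := by linarith

/-- Density of the generator domain. -/
lemma aux_dense_domain [CompleteSpace E] {S : ℝ → E →L[ℝ] E} (hS : IsC0Semigroup S) (x : E) {ε : ℝ}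
    (hε : 0 < ε) : ∃ x' y' : E, C0GenRel S x' y' ∧ ‖x - x'‖ < ε := by
  -- choose small t with sup bound
  have hcw : ContinuousWithinAt (fun r => S r x) (Ici 0) 0 := hS.strongCont x 0 (mem_Ici.2 le_rfl)
  rw [Metric.continuousWithinAt_iff] at hcw
  obtain ⟨δ, hδ, hδ'⟩ := hcw (ε/2) (by linarith)
  set t : ℝ := δ/2 with htdef
  have ht0 : 0 < t := by positivity
  have hSx : ∀ r ∈ Icc (0:ℝ) t, ‖S r x - x‖ ≤ ε/2 := by
    intro r hr
    have : dist r 0 < δ := by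
      rw [Real.dist_eq, sub_zero, abs_of_nonneg hr.1]
      have := hr.2; rw [htdef] at this; linarith
    have := hδ' hr.1 this
    rw [dist_eq_norm] at this
    have h0 : S 0 x = x := by rw [hS.map_zero]; rfl
    rw [h0] at this
    exact this.le
  have hintOn : ∀ b c : ℝ, 0 ≤ b → b ≤ c → IntervalIntegrable (fun r => S r x) volume b c := by
    intro b c hb hbc
    apply ContinuousOn.intervalIntegrable
    apply (hS.strongCont x).mono
    intro u hu
    rw [uIcc_of_le hbc] at hu
    exact le_trans hb hu.1
  set x' : E := t⁻¹ • ∫ r in (0:ℝ)..t, S r x with hx'def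
  set y' : E := t⁻¹ • (S t x - x) with hy'def
  have hclose : ‖x - x'‖ < ε := by
    have hconst : (∫ _ in (0:ℝ)..t, x) = t • x := by
      rw [intervalIntegral.integral_const]; congr 1; ring
    have : x - x' = t⁻¹ • ∫ r in (0:ℝ)..t, (x - S r x) := by
      rw [intervalIntegral.integral_sub intervalIntegrable_const (hintOn 0 t le_rfl ht0.le),
        hconst, smul_sub, smul_smul, inv_mul_cancel₀ (ne_of_gt ht0), one_smul, hx'def]
    rw [this, norm_smul, norm_inv, Real.norm_eq_abs, abs_of_pos ht0]
    have hbd : ‖∫ r in (0:ℝ)..t, (x - S r x)‖ ≤ (ε/2) * |t - 0| := by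
      apply intervalIntegral.norm_integral_le_of_norm_le_const
      intro u hu
      rw [uIoc_of_le ht0.le] at hu
      rw [norm_sub_rev]
      exact hSx u ⟨hu.1.le, hu.2⟩
    rw [sub_zero, abs_of_pos ht0] at hbd
    calc t⁻¹ * ‖∫ r in (0:ℝ)..t, (x - S r x)‖ ≤ t⁻¹ * ((ε/2)*t) := by
          apply mul_le_mul_of_nonneg_left hbd (by positivity)
    _ = ε/2 := by field_simp
    _ < ε := by linarith
  refine ⟨x', y', ?_, hclose⟩
  -- the generator relation for x'
  unfold C0GenRel
  have hlim1 : Tendsto (fun h : ℝ => h⁻¹ • ∫ u in t..(t+h), S u x) (𝓝[Ioi 0] 0)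
      (𝓝 (S t x)) := aux_avg_tendsto (hS.strongCont x) ht0.le
  have hlim2 : Tendsto (fun h : ℝ => h⁻¹ • ∫ u in (0:ℝ)..(0+h), S u x) (𝓝[Ioi 0] 0)
      (𝓝 (S 0 x)) := aux_avg_tendsto (hS.strongCont x) le_rfl
  have h0 : S 0 x = x := by rw [hS.map_zero]; rfl
  rw [h0] at hlim2
  have hcomb : Tendsto (fun h : ℝ => t⁻¹ • ((h⁻¹ • ∫ u in t..(t+h), S u x)
      - (h⁻¹ • ∫ u in (0:ℝ)..(0+h), S u x))) (𝓝[Ioi 0] 0) (𝓝 y') := by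
    rw [hy'def]
    exact ((hlim1.sub hlim2).const_smul t⁻¹)
  apply hcomb.congr'
  filter_upwards [self_mem_nhdsWithin] with h hh
  have hh0 : (0:ℝ) < h := hh
  -- S h x' = t⁻¹ • ∫_h^{t+h} S u x
  have hSh : S h x' = t⁻¹ • ∫ u in h..(t+h), S u x := by
    rw [hx'def, ContinuousLinearMap.map_smul]
    congr 1
    rw [← (S h).intervalIntegral_comp_comm (hintOn 0 t le_rfl ht0.le)]
    have hcongr : ∫ r in (0:ℝ)..t, S h (S r x) = ∫ r in (0:ℝ)..t, S (h + r) x := by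
      apply intervalIntegral.integral_congr
      intro r hr
      rw [uIcc_of_le ht0.le] at hr
      show S h (S r x) = S (h + r) x
      rw [hS.map_add h r hh0.le hr.1]
      rfl
    rw [hcongr, intervalIntegral.integral_comp_add_left (fun u => S u x) h, add_zero,
      add_comm h t]
  -- split: ∫_h^{t+h} - ∫_0^t = ∫_t^{t+h} - ∫_0^h
  have hsplit : (∫ u in h..(t+h), S u x) - ∫ u in (0:ℝ)..t, S u x
      = (∫ u in t..(t+h), S u x) - ∫ u in (0:ℝ)..h, S u x := by
    have i1 : IntervalIntegrable (fun u => S u x) volume 0 h := hintOn 0 h le_rfl hh0.le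
    have i2 : IntervalIntegrable (fun u => S u x) volume h (t+h) :=
      hintOn h (t+h) hh0.le (by linarith)
    have i3 : IntervalIntegrable (fun u => S u x) volume 0 t := hintOn 0 t le_rfl ht0.le
    have i4 : IntervalIntegrable (fun u => S u x) volume t (t+h) :=
      hintOn t (t+h) ht0.le (by linarith)
    have e1 := intervalIntegral.integral_add_adjacent_intervals i1 i2
    have e2 := intervalIntegral.integral_add_adjacent_intervals i3 i4
    rw [← e2] at e1
    -- e1 : ∫_0^h + ∫_h^{t+h} = ∫_0^t + ∫_t^{t+h}
    abel_nf
    abel_nf at e1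
    linear_combination (norm := abel_nf) e1
  -- conclude
  have : h⁻¹ • (S h x' - x') = t⁻¹ • ((h⁻¹ • ∫ u in t..(t+h), S u x)
      - (h⁻¹ • ∫ u in (0:ℝ)..(0+h), S u x)) := by
    rw [hSh, hx'def, ← smul_sub t⁻¹, smul_comm h⁻¹ t⁻¹, hsplit, smul_sub h⁻¹, zero_add]
  rw [this]



/-- Joint continuity of the Volterra integrand. -/
lemma aux_integrand_cont [CompleteSpace E₁] {T₁ : ℝ → E₁ →L[ℝ] E₁} (hT : IsC0Semigroup T₁)
    {f : ℝ → E₁} {t : ℝ} (ht : 0 ≤ t) (hf : ContinuousOn f (Icc (0:ℝ) t)) :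
    ContinuousOn (fun r => T₁ (t - r) (f r)) (Icc (0:ℝ) t) := by
  obtain ⟨M, hM1, hM⟩ := aux_sg_bound hT t
  intro r₀ hr₀
  have hmaps : MapsTo (fun r : ℝ => t - r) (Icc (0:ℝ) t) (Ici (0:ℝ)) := by
    intro r hr; exact sub_nonneg.2 hr.2
  have h2 : ContinuousWithinAt (fun r => T₁ (t - r) (f r₀)) (Icc (0:ℝ) t) r₀ := by
    have := (hT.strongCont (f r₀)).comp
      ((continuous_const.sub continuous_id).continuousOn) hmaps
    exact this r₀ hr₀
  have h1 : Tendsto (fun r => T₁ (t - r) (f r - f r₀)) (𝓝[Icc (0:ℝ) t] r₀) (𝓝 0) := by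
    apply squeeze_zero_norm' (a := fun r => M * ‖f r - f r₀‖)
    · filter_upwards [self_mem_nhdsWithin] with r hr
      calc ‖T₁ (t - r) (f r - f r₀)‖ ≤ ‖T₁ (t - r)‖ * ‖f r - f r₀‖ :=
            (T₁ (t - r)).le_opNorm _
      _ ≤ M * ‖f r - f r₀‖ := by
          apply mul_le_mul_of_nonneg_right (hM _ ⟨sub_nonneg.2 hr.2, by linarith [hr.1]⟩)
            (norm_nonneg _)
    · have : Tendsto (fun r => f r - f r₀) (𝓝[Icc (0:ℝ) t] r₀) (𝓝 0) := by
        have hsub : ContinuousWithinAt (fun r => f r - f r₀) (Icc (0:ℝ) t) r₀ :=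
          (hf r₀ hr₀).sub continuousWithinAt_const
        unfold ContinuousWithinAt at hsub
        simp only [sub_self] at hsub
        exact hsub
      simpa using (this.norm.const_mul M)
  have : Tendsto (fun r => T₁ (t - r) (f r - f r₀) + T₁ (t - r) (f r₀))
      (𝓝[Icc (0:ℝ) t] r₀) (𝓝 (0 + T₁ (t - r₀) (f r₀))) := h1.add h2
  rw [zero_add] at this
  apply this.congr
  intro r
  rw [← ContinuousLinearMap.map_add]
  congr 1
  abel

lemma aux_integrand_integrable [CompleteSpace E₁] {T₁ : ℝ → E₁ →L[ℝ] E₁}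
    (hT : IsC0Semigroup T₁) {f : ℝ → E₁} {t : ℝ} (ht : 0 ≤ t)
    (hf : ContinuousOn f (Icc (0:ℝ) t)) :
    IntervalIntegrable (fun r => T₁ (t - r) (f r)) volume 0 t := by
  apply ContinuousOn.intervalIntegrable
  rw [uIcc_of_le ht]
  exact aux_integrand_cont hT ht hf

section MoreAux
variable [CompleteSpace E] [CompleteSpace E₁]

@[simp] lemma implemented_apply (T : ℝ → E →L[ℝ] E) (t : ℝ) (C : E →L[ℝ] E) (x : E) :
    implemented T t C x = T t (C x) := rfl

@[simp] lemma implementedExt_apply (T₁ : ℝ → E₁ →L[ℝ] E₁) (t : ℝ) (S : E →L[ℝ] E₁) (x : E) :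
    implementedExt T₁ t S x = T₁ t (S x) := rfl

/-- The implemented semigroup is a bi-continuous semigroup. -/
lemma aux_implemented_bicont {S : ℝ → E →L[ℝ] E} (hS : IsC0Semigroup S) :
    IsBiContSotSemigroup (implemented S) := by
  constructor
  · ext C x
    simp [implemented, hS.map_zero]
  · intro s t hs ht
    ext C x
    simp [implemented, hS.map_add s t hs ht]
  · intro C x
    exact (hS.strongCont (C x)).congr (fun t _ => rfl)
  · obtain ⟨M, hM1, ω, hM⟩ := aux_exp_bound hS
    refine ⟨M, hM1, ω, fun t ht => ?_⟩
    apply ContinuousLinearMap.opNorm_le_bound _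
      (by positivity)
    intro C
    calc ‖implemented S t C‖ = ‖(S t).comp C‖ := rfl
    _ ≤ ‖S t‖ * ‖C‖ := ContinuousLinearMap.opNorm_comp_le _ _
    _ ≤ M * Real.exp (ω * t) * ‖C‖ :=
        mul_le_mul_of_nonneg_right (hM t ht) (norm_nonneg _)
  · intro b hb u hu hu0 x ε hε
    obtain ⟨M, hM1, hM⟩ := aux_sg_bound hS b
    have hM0 : (0:ℝ) < M := lt_of_lt_of_le zero_lt_one hM1
    have := (hu0 x)
    rw [NormedAddCommGroup.tendsto_nhds_zero] at this
    obtain ⟨N, hN⟩ := (this (ε / M) (by positivity)).exists_forall_of_atTop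
    refine ⟨N, fun n hn t ht => ?_⟩
    calc ‖implemented S t (u n) x‖ = ‖S t (u n x)‖ := rfl
    _ ≤ ‖S t‖ * ‖u n x‖ := (S t).le_opNorm _
    _ ≤ M * ‖u n x‖ := mul_le_mul_of_nonneg_right (hM t ht) (norm_nonneg _)
    _ < M * (ε / M) := by
        apply mul_lt_mul_of_pos_left _ hM0
        simpa using hN n hn
    _ = ε := by field_simp

/-- Pointwise generator relations give the `τ_sot` generator relation. -/
lemma aux_sot_gen_of_pointwise {S : ℝ → E →L[ℝ] E} (hS : IsC0Semigroup S)
    {C Y : E →L[ℝ] E} (h : ∀ x, C0GenRel S (C x) (Y x)) :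
    SotGenRel (implemented S) C Y := by
  obtain ⟨M, hM1, hM⟩ := aux_favard hS
  constructor
  · intro x
    exact (h x).congr (fun t => rfl)
  · refine ⟨M * ‖Y‖, fun t ht => ?_⟩
    apply ContinuousLinearMap.opNorm_le_bound _
      (mul_nonneg (mul_nonneg (by linarith : (0:ℝ) ≤ M) (norm_nonneg Y)) ht.1.le)
    intro x
    have := hM (C x) (Y x) (h x) t ⟨ht.1.le, ht.2⟩
    calc ‖(implemented S t C - C) x‖ = ‖S t (C x) - C x‖ := rfl
    _ ≤ M * ‖Y x‖ * t := this
    _ ≤ M * (‖Y‖ * ‖x‖) * t := by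
        apply mul_le_mul_of_nonneg_right _ ht.1.le
        exact mul_le_mul_of_nonneg_left (Y.le_opNorm x) (by linarith)
    _ = M * ‖Y‖ * t * ‖x‖ := by ring

lemma aux_pointwise_of_sot_gen {S : ℝ → E →L[ℝ] E}
    {C Y : E →L[ℝ] E} (h : SotGenRel (implemented S) C Y) (x : E) :
    C0GenRel S (C x) (Y x) :=
  (h.1 x).congr (fun t => rfl)

lemma aux_subsingleton_E₁ (hE : Subsingleton E) {ι : E →L[ℝ] E₁} (hd : DenseRange ι) :
    Subsingleton E₁ := by
  have h0 : Set.range ι = {0} := by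
    apply Set.eq_singleton_iff_unique_mem.2
    refine ⟨⟨0, map_zero ι⟩, ?_⟩
    rintro z ⟨x, rfl⟩
    rw [Subsingleton.elim x 0, map_zero]
  have : closure (Set.range ι) = Set.univ := hd.closure_range
  rw [h0] at this
  have : ∀ z : E₁, z = 0 := by
    intro z
    have hz : z ∈ closure ({0} : Set E₁) := this ▸ Set.mem_univ z
    rwa [closure_singleton, Set.mem_singleton_iff] at hz
  exact ⟨fun a b => by rw [this a, this b]⟩

end MoreAux


section Backward
variable [CompleteSpace E] [CompleteSpace E₁]

lemma aux_smulRight_sub (ψ : E →L[ℝ] ℝ) (a b : E) :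
    ψ.smulRight a - ψ.smulRight b = ψ.smulRight (a - b) := by
  ext w; simp [smul_sub]

lemma aux_dual_exists [Nontrivial E] :
    ∃ (z₀ : E) (ψ : E →L[ℝ] ℝ), ψ z₀ = 1 ∧ ‖ψ‖ * ‖z₀‖ = 1 ∧ ∀ x : E, x ≠ 0 →
      ∃ φ : E →L[ℝ] ℝ, φ x = 1 ∧ ‖φ‖ * ‖x‖ = 1 := by
  have base : ∀ x : E, x ≠ 0 → ∃ φ : E →L[ℝ] ℝ, φ x = 1 ∧ ‖φ‖ * ‖x‖ = 1 := by
    intro x hx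
    obtain ⟨g, hg1, hgx⟩ := exists_dual_vector ℝ x (norm_ne_zero_iff.2 hx)
    have hxn : ‖x‖ ≠ 0 := norm_ne_zero_iff.2 hx
    refine ⟨‖x‖⁻¹ • g, ?_, ?_⟩
    · simp only [ContinuousLinearMap.smul_apply, smul_eq_mul]
      rw [show g x = ‖x‖ from by exact_mod_cast hgx]
      field_simp
    · rw [norm_smul ‖x‖⁻¹ g, Real.norm_eq_abs, abs_of_nonneg (by positivity), hg1, mul_one]
      field_simp
  obtain ⟨z₀, hz₀⟩ := exists_ne (0 : E)
  obtain ⟨ψ, hψ1, hψ2⟩ := base z₀ hz₀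
  exact ⟨z₀, ψ, hψ1, hψ2, base⟩

/-- Backward direction: from a DS perturbation `B` of `T` to a DS perturbation of `𝒰`. -/
lemma aux_backward [Nontrivial E]
    (T S : ℝ → E →L[ℝ] E) (T₁ : ℝ → E₁ →L[ℝ] E₁) (ι : E →L[ℝ] E₁) (Am : E ≃L[ℝ] E₁)
    (hExt : ExtrapolationData T T₁ ι Am) (hS : IsC0Semigroup S)
    (t₀ : ℝ) (ht₀ : 0 < t₀)
    (B : E →L[ℝ] E₁) (hB : MemSDS T₁ ι B t₀)
    (hBfav : ∀ x : E, ∃ M' : ℝ, ∀ s ∈ Ioo (0:ℝ) 1, ‖T₁ s (B x) - B x‖ ≤ M' * s)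
    (hBgen : ∀ x y : E, C0GenRel S x y ↔ ι y = Am x + B x) :
    ∃ K : (E →L[ℝ] E) →L[ℝ] (E →L[ℝ] E₁), MemSDSsot T₁ ι K t₀ ∧
      (∀ C : E →L[ℝ] E, ∃ M' : ℝ, ∀ s ∈ Ioo (0:ℝ) 1,
        ‖implementedExt T₁ s (K C) - K C‖ ≤ M' * s) ∧
      GeneratedByPerturbedImpl (implemented S) ι Am K := by
  classical
  set K : (E →L[ℝ] E) →L[ℝ] (E →L[ℝ] E₁) := ContinuousLinearMap.compL ℝ E E E₁ B with hKdef
  have hKapp : ∀ (C : E →L[ℝ] E) (x : E), (K C) x = B (C x) := fun C x => rfl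
  obtain ⟨q, hq0, hq1, hmain⟩ := hB
  refine ⟨K, ⟨?_, q, hq0, hq1, ?_⟩, ?_, ?_⟩
  · -- sot-continuity estimate
    intro x
    refine ⟨{x}, ‖B‖, norm_nonneg B, fun S' => ?_⟩
    rw [Finset.sum_singleton, hKapp]
    exact B.le_opNorm (S' x)
  · -- the Volterra operator
    intro F hF
    obtain ⟨hFc, ⟨MF₀, hMF₀⟩, hFbe⟩ := hF
    set MF : ℝ := max MF₀ 0 with hMFdef
    have hMF : ∀ t ∈ Icc (0:ℝ) t₀, ‖F t‖ ≤ MF := fun t ht => (hMF₀ t ht).trans (le_max_left _ _)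
    have hMF0 : 0 ≤ MF := le_max_right _ _
    choose GG hid hcont hbd using fun C : E →L[ℝ] E => hmain (fun r => F r C) (hFc C)
    have hintble : ∀ t ∈ Icc (0:ℝ) t₀, ∀ (C : E →L[ℝ] E) (x : E),
        IntervalIntegrable (fun r => T₁ (t - r) (B (F r C x))) volume 0 t := by
      intro t ht C x
      apply aux_integrand_integrable hExt.c0T₁ ht.1
      exact B.continuous.comp_continuousOn ((hFc C x).mono (Icc_subset_Icc le_rfl ht.2))
    have hGadd : ∀ t ∈ Icc (0:ℝ) t₀, ∀ C C' : E →L[ℝ] E,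
        GG (C + C') t = GG C t + GG C' t := by
      intro t ht C C'
      ext x
      apply hExt.inj
      rw [ContinuousLinearMap.add_apply, map_add, hid (C + C') t ht x, hid C t ht x,
        hid C' t ht x]
      rw [← intervalIntegral.integral_add (hintble t ht C x) (hintble t ht C' x)]
      apply intervalIntegral.integral_congr
      intro r _
      simp only [ContinuousLinearMap.add_apply, map_add]
    have hGsmul : ∀ t ∈ Icc (0:ℝ) t₀, ∀ (a : ℝ) (C : E →L[ℝ] E),
        GG (a • C) t = a • GG C t := by
      intro t ht a C
      ext x
      apply hExt.inj
      rw [ContinuousLinearMap.smul_apply, ContinuousLinearMap.map_smul, hid (a • C) t ht x,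
        hid C t ht x, ← intervalIntegral.integral_smul]
      apply intervalIntegral.integral_congr
      intro r _
      simp only [ContinuousLinearMap.smul_apply, ContinuousLinearMap.map_smul]
    have hGbound : ∀ t ∈ Icc (0:ℝ) t₀, ∀ C : E →L[ℝ] E, ‖GG C t‖ ≤ q * MF * ‖C‖ := by
      intro t ht C
      have := hbd C (MF * ‖C‖) (fun s hs => ((F s).le_opNorm C).trans
        (mul_le_mul_of_nonneg_right (hMF s hs) (norm_nonneg C))) t ht
      calc ‖GG C t‖ ≤ q * (MF * ‖C‖) := this
      _ = q * MF * ‖C‖ := by ring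
    set Ghat : ℝ → (E →L[ℝ] E) →L[ℝ] (E →L[ℝ] E) := fun t =>
      if ht : t ∈ Icc (0:ℝ) t₀ then
        LinearMap.mkContinuous
          { toFun := fun C => GG C t
            map_add' := hGadd t ht
            map_smul' := hGsmul t ht } (q * MF) (hGbound t ht)
      else 0 with hGhatdef
    have hGhat : ∀ t ∈ Icc (0:ℝ) t₀, ∀ C : E →L[ℝ] E, Ghat t C = GG C t := by
      intro t ht C
      rw [hGhatdef]
      simp only [dif_pos ht]
      rfl
    refine ⟨Ghat, ⟨?_, ⟨q * MF, fun t ht => ?_⟩, ?_⟩, ?_, ?_⟩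
    · -- strong continuity
      intro C x
      apply (hcont C x).congr
      intro t ht
      show Ghat t C x = GG C t x
      rw [hGhat t ht C]
    · -- norm bound
      apply ContinuousLinearMap.opNorm_le_bound _ (mul_nonneg hq0 hMF0)
      intro C
      rw [hGhat t ht C]
      exact hGbound t ht C
    · -- bi-equicontinuity
      intro u hubd hu0 x ε hε
      by_cases hx : x = 0
      · refine ⟨0, fun n _ t ht => ?_⟩
        rw [hx, ContinuousLinearMap.map_zero, norm_zero]
        exact hε
      · obtain ⟨_, _, _, _, hdual⟩ := aux_dual_exists (E := E)
        obtain ⟨φ, hφ1, hφn⟩ := hdual x hx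
        obtain ⟨N, hN⟩ := hFbe u hubd hu0 x (ε/2) (by linarith)
        refine ⟨N, fun n hn t ht => ?_⟩
        set Fn : ℝ → E →L[ℝ] E := fun r => φ.smulRight (F r (u n) x) with hFndef
        have hFnc : ∀ w : E, ContinuousOn (fun r => Fn r w) (Icc (0:ℝ) t₀) := by
          intro w
          apply ((hFc (u n) x).const_smul (φ w)).congr
          intro r _
          simp [hFndef]
        obtain ⟨Gn, hidn, _, hbdn⟩ := hmain Fn hFnc
        have heq : Ghat t (u n) x = Gn t x := by
          apply hExt.inj
          rw [hGhat t ht (u n), hid (u n) t ht x, hidn t ht x]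
          apply intervalIntegral.integral_congr
          intro r _
          simp [hFndef, hφ1]
        have hFnbd : ∀ s ∈ Icc (0:ℝ) t₀, ‖Fn s‖ ≤ ‖φ‖ * (ε/2) := by
          intro s hs
          rw [hFndef]
          simp only
          rw [ContinuousLinearMap.norm_smulRight_apply]
          exact mul_le_mul_of_nonneg_left (hN n hn s hs).le (norm_nonneg φ)
        have := hbdn (‖φ‖ * (ε/2)) hFnbd t ht
        have hGnx : ‖Gn t x‖ ≤ q * (‖φ‖ * (ε/2)) * ‖x‖ :=
          ((Gn t).le_opNorm x).trans (mul_le_mul_of_nonneg_right this (norm_nonneg x))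
        rw [heq]
        have hφx : ‖φ‖ * ‖x‖ = 1 := hφn
        calc ‖Gn t x‖ ≤ q * (‖φ‖ * (ε/2)) * ‖x‖ := hGnx
        _ = q * (ε/2) * (‖φ‖ * ‖x‖) := by ring
        _ = q * (ε/2) := by rw [hφx, mul_one]
        _ ≤ 1 * (ε/2) := mul_le_mul_of_nonneg_right hq1.le (by linarith)
        _ < ε := by linarith
    · -- identity
      intro t ht C x
      rw [hGhat t ht C, hid C t ht x]
      apply intervalIntegral.integral_congr
      intro r _
      rfl
    · -- final bound
      intro c hc t ht
      have hc0 : 0 ≤ c := (norm_nonneg (F 0)).trans (hc 0 ⟨le_rfl, ht₀.le⟩)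
      apply ContinuousLinearMap.opNorm_le_bound _ (mul_nonneg hq0 hc0)
      intro C
      rw [hGhat t ht C]
      have := hbd C (c * ‖C‖) (fun s hs => ((F s).le_opNorm C).trans
        (mul_le_mul_of_nonneg_right (hc s hs) (norm_nonneg C))) t ht
      calc ‖GG C t‖ ≤ q * (c * ‖C‖) := this
      _ = q * c * ‖C‖ := by ring
  · -- Favard class condition for K
    set g : Ioo (0:ℝ) 1 → E →L[ℝ] E₁ :=
      fun s => (s : ℝ)⁻¹ • ((T₁ (s : ℝ)).comp B - B) with hgdef
    have hgapp : ∀ (s : Ioo (0:ℝ) 1) (x : E),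
        g s x = (s : ℝ)⁻¹ • (T₁ (s : ℝ) (B x) - B x) := fun s x => rfl
    have hgbd : ∀ x : E, ∃ Cx : ℝ, ∀ s : Ioo (0:ℝ) 1, ‖g s x‖ ≤ Cx := by
      intro x
      obtain ⟨M', hM'⟩ := hBfav x
      refine ⟨max M' 0, fun s => ?_⟩
      rw [hgapp, norm_smul, norm_inv, Real.norm_eq_abs, abs_of_pos s.2.1]
      have h1 := hM' s s.2
      have hs0 : (0:ℝ) < (s:ℝ) := s.2.1
      calc (s:ℝ)⁻¹ * ‖T₁ (s:ℝ) (B x) - B x‖ ≤ (s:ℝ)⁻¹ * (M' * s) := by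
            apply mul_le_mul_of_nonneg_left h1 (by positivity)
      _ = M' := by field_simp
      _ ≤ max M' 0 := le_max_left _ _
    obtain ⟨M', hM'⟩ := banach_steinhaus hgbd
    have hM'0 : 0 ≤ M' := (norm_nonneg (g ⟨1/2, by norm_num, by norm_num⟩)).trans
      (hM' ⟨1/2, by norm_num, by norm_num⟩)
    intro C
    refine ⟨M' * ‖C‖, fun s hs => ?_⟩
    have hs0 : (0:ℝ) < s := hs.1
    apply ContinuousLinearMap.opNorm_le_bound _
      (mul_nonneg (mul_nonneg hM'0 (norm_nonneg C)) hs0.le)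
    intro x
    have h1 : (implementedExt T₁ s (K C) - K C) x = T₁ s (B (C x)) - B (C x) := rfl
    rw [h1]
    have h2 : T₁ s (B (C x)) - B (C x) = s • g ⟨s, hs⟩ (C x) := by
      rw [hgapp, smul_smul, mul_inv_cancel₀ (ne_of_gt hs0), one_smul]
    rw [h2, norm_smul, Real.norm_eq_abs, abs_of_pos hs0]
    calc s * ‖g ⟨s, hs⟩ (C x)‖ ≤ s * (M' * ‖C x‖) := by
          apply mul_le_mul_of_nonneg_left _ hs0.le
          exact ((g ⟨s, hs⟩).le_opNorm (C x)).trans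
            (mul_le_mul_of_nonneg_right (hM' ⟨s, hs⟩) (norm_nonneg _))
    _ ≤ s * (M' * (‖C‖ * ‖x‖)) := by
          apply mul_le_mul_of_nonneg_left _ hs0.le
          exact mul_le_mul_of_nonneg_left (C.le_opNorm x) hM'0
    _ = M' * ‖C‖ * s * ‖x‖ := by ring
  · -- generated by the perturbation
    refine ⟨aux_implemented_bicont hS, fun C Y => ⟨?_, ?_⟩⟩
    · intro h
      ext x
      have hpt := aux_pointwise_of_sot_gen h x
      have := (hBgen (C x) (Y x)).1 hpt
      simpa [hKapp] using this
    · intro h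
      apply aux_sot_gen_of_pointwise hS
      intro x
      apply (hBgen (C x) (Y x)).2
      have := ContinuousLinearMap.ext_iff.1 h x
      simpa [hKapp] using this

end Backward


section Forward
variable [CompleteSpace E] [CompleteSpace E₁]

set_option maxHeartbeats 1000000 in
/-- Forward direction: from a DS perturbation of `𝒰` to a DS perturbation `B` of `T`. -/
lemma aux_forward [Nontrivial E]
    (T S : ℝ → E →L[ℝ] E) (T₁ : ℝ → E₁ →L[ℝ] E₁) (ι : E →L[ℝ] E₁) (Am : E ≃L[ℝ] E₁)
    (hExt : ExtrapolationData T T₁ ι Am) (hS : IsC0Semigroup S)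
    (t₀ : ℝ) (ht₀ : 0 < t₀)
    (K : (E →L[ℝ] E) →L[ℝ] (E →L[ℝ] E₁)) (hK : MemSDSsot T₁ ι K t₀)
    (hKfav : ∀ C : E →L[ℝ] E, ∃ M' : ℝ, ∀ s ∈ Ioo (0:ℝ) 1,
      ‖implementedExt T₁ s (K C) - K C‖ ≤ M' * s)
    (hGen : GeneratedByPerturbedImpl (implemented S) ι Am K) :
    ∃ B : E →L[ℝ] E₁, MemSDS T₁ ι B t₀ ∧
      (∀ x : E, ∃ M' : ℝ, ∀ s ∈ Ioo (0:ℝ) 1, ‖T₁ s (B x) - B x‖ ≤ M' * s) ∧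
      ∀ x y : E, C0GenRel S x y ↔ ι y = Am x + B x := by
  classical
  obtain ⟨z₀, ψ, hψz, hψn, _⟩ := aux_dual_exists (E := E)
  set ρ : E →L[ℝ] (E →L[ℝ] E) := (ContinuousLinearMap.smulRightL ℝ E E) ψ with hρdef
  set B : E →L[ℝ] E₁ := (K.comp ρ).flip z₀ with hBdef
  have hBapp : ∀ x : E, B x = K (ψ.smulRight x) z₀ := fun x => rfl
  obtain ⟨hKc, q, hq0, hq1, hKmain⟩ := hK
  obtain ⟨Mf, hMf1, hMf⟩ := aux_favard hS
  -- rank-one operators with domain vectors give SotGenRel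
  have fwd : ∀ x y : E, C0GenRel S x y →
      SotGenRel (implemented S) (ψ.smulRight x) (ψ.smulRight y) := by
    intro x y hxy
    have h3 : ∀ t : ℝ, implemented S t (ψ.smulRight x) - ψ.smulRight x
        = ψ.smulRight (S t x - x) := by
      intro t
      ext w
      show S t ((ψ.smulRight x) w) - (ψ.smulRight x) w = ψ w • (S t x - x)
      rw [ContinuousLinearMap.smulRight_apply, ContinuousLinearMap.map_smul, ← smul_sub]
    constructor
    · intro w
      have h1 := hxy.const_smul (ψ w)
      have htar : (ψ.smulRight y) w = ψ w • y := rfl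
      rw [htar]
      apply h1.congr
      intro t
      have h4 : implemented S t (ψ.smulRight x) w - (ψ.smulRight x) w = ψ w • (S t x - x) := by
        have := ContinuousLinearMap.ext_iff.1 (h3 t) w
        rwa [ContinuousLinearMap.sub_apply, ContinuousLinearMap.smulRight_apply] at this
      rw [h4, smul_comm]
    · refine ⟨‖ψ‖ * (Mf * ‖y‖), fun t ht => ?_⟩
      rw [h3 t, ContinuousLinearMap.norm_smulRight_apply]
      calc ‖ψ‖ * ‖S t x - x‖ ≤ ‖ψ‖ * (Mf * ‖y‖ * t) :=
            mul_le_mul_of_nonneg_left (hMf x y hxy t ⟨ht.1.le, ht.2⟩) (norm_nonneg ψ)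
      _ = ‖ψ‖ * (Mf * ‖y‖) * t := by ring
  have hKrank : ∀ x y : E, C0GenRel S x y → ∀ w : E,
      K (ψ.smulRight x) w = ψ w • (ι y - Am x) := by
    intro x y hxy w
    have heq := (hGen.2 _ _).1 (fwd x y hxy)
    have h5 := ContinuousLinearMap.ext_iff.1 heq w
    simp only [ContinuousLinearMap.comp_apply, ContinuousLinearMap.add_apply,
      ContinuousLinearMap.smulRight_apply, ContinuousLinearMap.map_smul,
      ContinuousLinearEquiv.coe_coe] at h5
    have h6 : K (ψ.smulRight x) w = ψ w • ι y - ψ w • Am x := eq_sub_of_add_eq' h5.symm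
    rw [h6, smul_sub]
  have hBeq : ∀ x y : E, C0GenRel S x y → B x = ι y - Am x := by
    intro x y hxy
    rw [hBapp, hKrank x y hxy z₀, hψz, one_smul]
  have hKB : ∀ (x w : E), K (ψ.smulRight x) w = ψ w • B x := by
    intro x w
    obtain ⟨v, cw, hcw0, hbdw⟩ := hKc w
    set Cst : ℝ := cw * (∑ y ∈ v, ‖ψ y‖) + ‖ψ w‖ * ‖B‖ with hCst
    have hsum0 : 0 ≤ ∑ y ∈ v, ‖ψ y‖ := Finset.sum_nonneg (fun y _ => norm_nonneg _)
    have hCst0 : 0 ≤ Cst := by positivity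
    have key : ∀ ε : ℝ, 0 < ε → ‖K (ψ.smulRight x) w - ψ w • B x‖ ≤ Cst * ε := by
      intro ε hε
      obtain ⟨x', y', hgen', hclose⟩ := aux_dense_domain hS x hε
      have hterm2 : K (ψ.smulRight x') w = ψ w • B x' := by
        rw [hKrank x' y' hgen' w, hBeq x' y' hgen']
      have htri : ‖K (ψ.smulRight x) w - ψ w • B x‖ ≤
          ‖K (ψ.smulRight x) w - K (ψ.smulRight x') w‖ +
          ‖K (ψ.smulRight x') w - ψ w • B x‖ := by
        have := dist_triangle (K (ψ.smulRight x) w) (K (ψ.smulRight x') w) (ψ w • B x)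
        simpa [dist_eq_norm] using this
      have h1 : ‖K (ψ.smulRight x) w - K (ψ.smulRight x') w‖ ≤
          cw * (∑ y ∈ v, ‖ψ y‖) * ε := by
        have e : K (ψ.smulRight x) w - K (ψ.smulRight x') w
            = K (ψ.smulRight (x - x')) w := by
          rw [← aux_smulRight_sub, map_sub, ContinuousLinearMap.sub_apply]
        rw [e]
        calc ‖K (ψ.smulRight (x - x')) w‖
            ≤ cw * ∑ y ∈ v, ‖(ψ.smulRight (x - x')) y‖ := hbdw _
        _ = cw * ∑ y ∈ v, ‖ψ y‖ * ‖x - x'‖ := by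
              congr 1
              apply Finset.sum_congr rfl
              intro y _
              rw [ContinuousLinearMap.smulRight_apply, norm_smul]
        _ = cw * (∑ y ∈ v, ‖ψ y‖) * ‖x - x'‖ := by rw [← Finset.sum_mul]; ring
        _ ≤ cw * (∑ y ∈ v, ‖ψ y‖) * ε :=
              mul_le_mul_of_nonneg_left hclose.le (by positivity)
      have h2 : ‖K (ψ.smulRight x') w - ψ w • B x‖ ≤ ‖ψ w‖ * ‖B‖ * ε := by
        rw [hterm2, ← smul_sub, norm_smul]
        calc ‖ψ w‖ * ‖B x' - B x‖ ≤ ‖ψ w‖ * (‖B‖ * ε) := by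
              apply mul_le_mul_of_nonneg_left _ (norm_nonneg _)
              have : B x' - B x = B (x' - x) := (map_sub B x' x).symm
              rw [this]
              calc ‖B (x' - x)‖ ≤ ‖B‖ * ‖x' - x‖ := B.le_opNorm _
              _ ≤ ‖B‖ * ε := by
                    apply mul_le_mul_of_nonneg_left _ (norm_nonneg B)
                    rw [norm_sub_rev]
                    exact hclose.le
        _ = ‖ψ w‖ * ‖B‖ * ε := by ring
      calc ‖K (ψ.smulRight x) w - ψ w • B x‖
          ≤ ‖K (ψ.smulRight x) w - K (ψ.smulRight x') w‖ +
            ‖K (ψ.smulRight x') w - ψ w • B x‖ := htri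
      _ ≤ cw * (∑ y ∈ v, ‖ψ y‖) * ε + ‖ψ w‖ * ‖B‖ * ε := add_le_add h1 h2
      _ = Cst * ε := by rw [hCst]; ring
    have h0 : ‖K (ψ.smulRight x) w - ψ w • B x‖ ≤ 0 := by
      apply le_of_forall_pos_le_add
      intro ε hε
      have hC1 : (0:ℝ) < Cst + 1 := by linarith
      have := key (ε / (Cst + 1)) (by positivity)
      calc ‖K (ψ.smulRight x) w - ψ w • B x‖ ≤ Cst * (ε / (Cst + 1)) := this
      _ ≤ ε := by
            rw [mul_comm Cst (ε / (Cst + 1)), div_mul_eq_mul_div, div_le_iff₀ hC1]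
            nlinarith
      _ = 0 + ε := (zero_add ε).symm
    exact sub_eq_zero.1 (norm_le_zero_iff.1 h0)
  have hBmem : MemSDS T₁ ι B t₀ := by
    refine ⟨q, hq0, hq1, ?_⟩
    intro F hFc
    obtain ⟨MF, hMF0, hMF⟩ := aux_uniform_bound (b := t₀) hFc
    set Fhat : ℝ → (E →L[ℝ] E) →L[ℝ] (E →L[ℝ] E) := fun r =>
      ρ.comp ((F r).comp (ContinuousLinearMap.apply ℝ E z₀)) with hFhatdef
    have hFhatapp : ∀ (r : ℝ) (C : E →L[ℝ] E), Fhat r C = ψ.smulRight (F r (C z₀)) :=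
      fun r C => rfl
    have hFhatX : MemXsot t₀ Fhat := by
      refine ⟨?_, ⟨‖ψ‖ * MF * ‖z₀‖, fun t ht => ?_⟩, ?_⟩
      · intro C x
        apply ((hFc (C z₀)).const_smul (ψ x)).congr
        intro t _
        rfl
      · apply ContinuousLinearMap.opNorm_le_bound _ (by positivity)
        intro C
        rw [hFhatapp, ContinuousLinearMap.norm_smulRight_apply]
        calc ‖ψ‖ * ‖F t (C z₀)‖ ≤ ‖ψ‖ * (MF * (‖C‖ * ‖z₀‖)) := by
              apply mul_le_mul_of_nonneg_left _ (norm_nonneg ψ)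
              exact ((F t).le_opNorm (C z₀)).trans
                (mul_le_mul (hMF t ht) (C.le_opNorm z₀) (norm_nonneg _) hMF0)
        _ = ‖ψ‖ * MF * ‖z₀‖ * ‖C‖ := by ring
      · intro u hubd hu0 x ε hε
        set a : ℝ := ‖ψ x‖ * MF with hadef
        have ha0 : 0 ≤ a := mul_nonneg (norm_nonneg _) hMF0
        have hx0 := hu0 z₀
        rw [NormedAddCommGroup.tendsto_nhds_zero] at hx0
        obtain ⟨N, hN⟩ := (hx0 (ε / (a + 1)) (by positivity)).exists_forall_of_atTop
        refine ⟨N, fun n hn t ht => ?_⟩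
        have he : ‖Fhat t (u n) x‖ = ‖ψ x‖ * ‖F t ((u n) z₀)‖ := by
          have : Fhat t (u n) x = ψ x • F t ((u n) z₀) := rfl
          rw [this, norm_smul]
        rw [he]
        calc ‖ψ x‖ * ‖F t ((u n) z₀)‖ ≤ ‖ψ x‖ * (MF * ‖(u n) z₀‖) :=
              mul_le_mul_of_nonneg_left (((F t).le_opNorm _).trans
                (mul_le_mul_of_nonneg_right (hMF t ht) (norm_nonneg _))) (norm_nonneg _)
        _ = a * ‖(u n) z₀‖ := by ring
        _ ≤ a * (ε / (a + 1)) := mul_le_mul_of_nonneg_left (hN n hn).le ha0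
        _ < ε := by
              rw [mul_comm, div_mul_eq_mul_div, div_lt_iff₀ (by positivity)]
              nlinarith
    obtain ⟨Ghat, hGX, hGid, hGbd⟩ := hKmain Fhat hFhatX
    set G : ℝ → E →L[ℝ] E := fun t => ((Ghat t).comp ρ).flip z₀ with hGdef
    refine ⟨G, ?_, ?_, ?_⟩
    · intro t ht x
      calc ι (G t x) = ι (Ghat t (ψ.smulRight x) z₀) := rfl
      _ = ∫ r in (0:ℝ)..t, T₁ (t - r) ((K (Fhat r (ψ.smulRight x))) z₀) :=
            hGid t ht (ψ.smulRight x) z₀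
      _ = ∫ r in (0:ℝ)..t, T₁ (t - r) (B (F r x)) := by
            apply intervalIntegral.integral_congr
            intro r _
            show T₁ (t - r) ((K (Fhat r (ψ.smulRight x))) z₀) = T₁ (t - r) (B (F r x))
            congr 1
            have he2 : Fhat r (ψ.smulRight x) = ψ.smulRight (F r x) := by
              rw [hFhatapp]
              congr 1
              show F r ((ψ.smulRight x) z₀) = F r x
              rw [ContinuousLinearMap.smulRight_apply, hψz, one_smul]
            rw [he2, hBapp]
    · intro x
      apply (hGX.1 (ψ.smulRight x) z₀).congr
      intro t _
      rfl
    · intro c hc t ht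
      have hc0 : 0 ≤ c := (norm_nonneg (F 0)).trans (hc 0 ⟨le_rfl, ht₀.le⟩)
      have hFhatbd : ∀ s ∈ Icc (0:ℝ) t₀, ‖Fhat s‖ ≤ c := by
        intro s hs
        apply ContinuousLinearMap.opNorm_le_bound _ hc0
        intro C
        rw [hFhatapp, ContinuousLinearMap.norm_smulRight_apply]
        calc ‖ψ‖ * ‖F s (C z₀)‖ ≤ ‖ψ‖ * (c * (‖C‖ * ‖z₀‖)) := by
              apply mul_le_mul_of_nonneg_left _ (norm_nonneg ψ)
              exact ((F s).le_opNorm (C z₀)).trans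
                (mul_le_mul (hc s hs) (C.le_opNorm z₀) (norm_nonneg _) hc0)
        _ = (‖ψ‖ * ‖z₀‖) * (c * ‖C‖) := by ring
        _ = c * ‖C‖ := by rw [hψn, one_mul]
      have hGt := hGbd c hFhatbd t ht
      apply ContinuousLinearMap.opNorm_le_bound _ (mul_nonneg hq0 hc0)
      intro x
      calc ‖G t x‖ = ‖Ghat t (ψ.smulRight x) z₀‖ := rfl
      _ ≤ ‖Ghat t (ψ.smulRight x)‖ * ‖z₀‖ := (Ghat t (ψ.smulRight x)).le_opNorm z₀
      _ ≤ (‖Ghat t‖ * ‖ψ.smulRight x‖) * ‖z₀‖ :=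
            mul_le_mul_of_nonneg_right ((Ghat t).le_opNorm _) (norm_nonneg z₀)
      _ = ‖Ghat t‖ * (‖ψ‖ * ‖x‖) * ‖z₀‖ := by
            rw [ContinuousLinearMap.norm_smulRight_apply]
      _ ≤ (q * c) * (‖ψ‖ * ‖x‖) * ‖z₀‖ := by
            apply mul_le_mul_of_nonneg_right _ (norm_nonneg z₀)
            exact mul_le_mul_of_nonneg_right hGt
              (mul_nonneg (norm_nonneg ψ) (norm_nonneg x))
      _ = (‖ψ‖ * ‖z₀‖) * ((q * c) * ‖x‖) := by ring
      _ = q * c * ‖x‖ := by rw [hψn, one_mul]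
  refine ⟨B, hBmem, ?_, fun x y => ⟨?_, ?_⟩⟩
  · intro x
    obtain ⟨M', hM'⟩ := hKfav (ψ.smulRight x)
    refine ⟨M' * ‖z₀‖, fun s hs => ?_⟩
    have h1 : T₁ s (B x) - B x
        = (implementedExt T₁ s (K (ψ.smulRight x)) - K (ψ.smulRight x)) z₀ := rfl
    rw [h1]
    calc ‖(implementedExt T₁ s (K (ψ.smulRight x)) - K (ψ.smulRight x)) z₀‖
        ≤ ‖implementedExt T₁ s (K (ψ.smulRight x)) - K (ψ.smulRight x)‖ * ‖z₀‖ :=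
          ContinuousLinearMap.le_opNorm _ z₀
    _ ≤ (M' * s) * ‖z₀‖ := mul_le_mul_of_nonneg_right (hM' s hs) (norm_nonneg z₀)
    _ = M' * ‖z₀‖ * s := by ring
  · intro hxy
    have heq := (hGen.2 _ _).1 (fwd x y hxy)
    have h5 := ContinuousLinearMap.ext_iff.1 heq z₀
    simp only [ContinuousLinearMap.comp_apply, ContinuousLinearMap.add_apply,
      ContinuousLinearMap.smulRight_apply, hψz, one_smul,
      ContinuousLinearEquiv.coe_coe] at h5
    rw [h5, hBapp]
  · intro hiB
    have heq : ι.comp (ψ.smulRight y)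
        = ((Am : E →L[ℝ] E₁)).comp (ψ.smulRight x) + K (ψ.smulRight x) := by
      ext w
      have h2 := hKB x w
      simp only [ContinuousLinearMap.comp_apply, ContinuousLinearMap.add_apply,
        ContinuousLinearMap.smulRight_apply, ContinuousLinearMap.map_smul,
        ContinuousLinearEquiv.coe_coe, h2]
      rw [hiB, smul_add]
    have hsot := (hGen.2 _ _).2 heq
    have hpt := aux_pointwise_of_sot_gen hsot z₀
    have e1 : (ψ.smulRight x) z₀ = x := by
      rw [ContinuousLinearMap.smulRight_apply, hψz, one_smul]
    have e2 : (ψ.smulRight y) z₀ = y := by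
      rw [ContinuousLinearMap.smulRight_apply, hψz, one_smul]
    rwa [e1, e2] at hpt

end Forward


section Trivial
variable [CompleteSpace E] [CompleteSpace E₁]

lemma aux_triv_B (hE : Subsingleton E) (hE₁ : Subsingleton E₁)
    (S : ℝ → E →L[ℝ] E) (T₁ : ℝ → E₁ →L[ℝ] E₁) (ι : E →L[ℝ] E₁) (Am : E ≃L[ℝ] E₁)
    (t₀ : ℝ) (ht₀ : 0 < t₀) :
    ∃ B : E →L[ℝ] E₁, MemSDS T₁ ι B t₀ ∧
      (∀ x : E, ∃ M' : ℝ, ∀ s ∈ Ioo (0:ℝ) 1, ‖T₁ s (B x) - B x‖ ≤ M' * s) ∧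
      ∀ x y : E, C0GenRel S x y ↔ ι y = Am x + B x := by
  refine ⟨0, ⟨1/2, by norm_num, by norm_num, ?_⟩, ?_, ?_⟩
  · intro F hF
    refine ⟨fun _ => 0, ?_, ?_, ?_⟩
    · intro t ht x
      simp
    · intro x
      simp only [ContinuousLinearMap.zero_apply]
      exact continuousOn_const
    · intro c hc t ht
      have hc0 : 0 ≤ c := (norm_nonneg (F 0)).trans (hc 0 ⟨le_rfl, ht₀.le⟩)
      have h0 : ‖(0 : E →L[ℝ] E)‖ = 0 := ContinuousLinearMap.opNorm_zero
      show ‖(0 : E →L[ℝ] E)‖ ≤ 1 / 2 * c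
      rw [h0]
      linarith
  · intro x
    exact ⟨0, fun s hs => by simp⟩
  · intro x y
    constructor
    · intro _
      exact Subsingleton.elim _ _
    · intro _
      unfold C0GenRel
      have he : (fun t : ℝ => t⁻¹ • (S t x - x)) = fun _ => y :=
        funext fun t => Subsingleton.elim _ _
      rw [he]
      exact tendsto_const_nhds

lemma aux_triv_K (hE : Subsingleton E) (hE₁ : Subsingleton E₁)
    (S : ℝ → E →L[ℝ] E) (T₁ : ℝ → E₁ →L[ℝ] E₁) (ι : E →L[ℝ] E₁) (Am : E ≃L[ℝ] E₁)
    (hS : IsC0Semigroup S) (t₀ : ℝ) (ht₀ : 0 < t₀) :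
    ∃ K : (E →L[ℝ] E) →L[ℝ] (E →L[ℝ] E₁), MemSDSsot T₁ ι K t₀ ∧
      (∀ C : E →L[ℝ] E, ∃ M' : ℝ, ∀ s ∈ Ioo (0:ℝ) 1,
        ‖implementedExt T₁ s (K C) - K C‖ ≤ M' * s) ∧
      GeneratedByPerturbedImpl (implemented S) ι Am K := by
  refine ⟨0, ⟨?_, 1/2, by norm_num, by norm_num, ?_⟩, ?_, ?_, ?_⟩
  · intro x
    exact ⟨∅, 0, le_rfl, fun S' => by simp⟩
  · intro F hF
    refine ⟨fun _ => 0, ⟨?_, ⟨0, fun t _ => by simp⟩, ?_⟩, ?_, ?_⟩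
    · intro C x
      simp only [ContinuousLinearMap.zero_apply]
      exact continuousOn_const
    · intro u _ _ x ε hε
      refine ⟨0, fun n _ t _ => ?_⟩
      simpa using hε
    · intro t ht C x
      simp
    · intro c hc t ht
      have hc0 : 0 ≤ c := (norm_nonneg (F 0)).trans (hc 0 ⟨le_rfl, ht₀.le⟩)
      have h0 : ‖(0 : (E →L[ℝ] E) →L[ℝ] (E →L[ℝ] E))‖ = 0 := ContinuousLinearMap.opNorm_zero
      show ‖(0 : (E →L[ℝ] E) →L[ℝ] (E →L[ℝ] E))‖ ≤ 1 / 2 * c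
      rw [h0]
      linarith
  · intro C
    exact ⟨0, fun s hs => by simp⟩
  · exact aux_implemented_bicont hS
  · intro C Y
    constructor
    · intro _
      exact Subsingleton.elim _ _
    · intro _
      constructor
      · intro x
        have he : (fun t : ℝ => t⁻¹ • (implemented S t C x - C x)) = fun _ => Y x :=
          funext fun t => Subsingleton.elim _ _
        rw [he]
        exact tendsto_const_nhds
      · refine ⟨0, fun t ht => ?_⟩
        rw [Subsingleton.elim (implemented S t C - C) 0, norm_zero, zero_mul]

end Trivial

/-- `𝒱` arises from the implemented semigroup `𝒰` by a Desch–Schappacher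
perturbation with range in `F₀(𝒢)` iff `S` arises from `T` by a Desch–Schappacher perturbation
with range in `F₀(A)`. -/
theorem stmt_14 [CompleteSpace E] [CompleteSpace E₁]
    (T S : ℝ → E →L[ℝ] E) (T₁ : ℝ → E₁ →L[ℝ] E₁) (ι : E →L[ℝ] E₁) (Am : E ≃L[ℝ] E₁)
    (hExt : ExtrapolationData T T₁ ι Am) (hS : IsC0Semigroup S)
    (t₀ : ℝ) (ht₀ : 0 < t₀) :
    (∃ K : (E →L[ℝ] E) →L[ℝ] (E →L[ℝ] E₁), MemSDSsot T₁ ι K t₀ ∧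
        (∀ C : E →L[ℝ] E, ∃ M' : ℝ, ∀ s ∈ Ioo (0:ℝ) 1,
          ‖implementedExt T₁ s (K C) - K C‖ ≤ M' * s) ∧
        GeneratedByPerturbedImpl (implemented S) ι Am K) ↔
      (∃ B : E →L[ℝ] E₁, MemSDS T₁ ι B t₀ ∧
        (∀ x : E, ∃ M' : ℝ, ∀ s ∈ Ioo (0:ℝ) 1, ‖T₁ s (B x) - B x‖ ≤ M' * s) ∧
        ∀ x y : E, C0GenRel S x y ↔ ι y = Am x + B x) := by
  rcases subsingleton_or_nontrivial E with hE | hE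
  · have hE₁ : Subsingleton E₁ := aux_subsingleton_E₁ hE hExt.dense
    constructor
    · intro _
      exact aux_triv_B hE hE₁ S T₁ ι Am t₀ ht₀
    · intro _
      exact aux_triv_K hE hE₁ S T₁ ι Am hS t₀ ht₀
  · constructor
    · rintro ⟨K, hK, hKfav, hGen⟩
      exact aux_forward T S T₁ ι Am hExt hS t₀ ht₀ K hK hKfav hGen
    · rintro ⟨B, hB, hBfav, hBgen⟩
      exact aux_backward T S T₁ ι Am hExt hS t₀ ht₀ B hB hBfav hBgen
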